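/- Suppose R ⪰ 0 (positive semidefinite) and there exists a symmetric matrix X ∈ ℝ^{n×n} with X ≻ 0 such that L(X) ≺ 0 (negative definite). Then the system satisfies quadratic performance specified by P. -/

import Mathlib

open Matrix Filter Topology

namespace QPaux

variable {ι κ : Type*} [Fintype ι] [Fintype κ]

lemma dot_self_nonneg (x : ι → ℝ) : 0 ≤ x ⬝ᵥ x :=
  Finset.sum_nonneg fun i _ => mul_self_nonneg _

lemma sq_le_dot (x : ι → ℝ) (i : ι) : x i * x i ≤ x ⬝ᵥ x :=
  Finset.single_le_sum (fun j _ => mul_self_nonneg (x j)) (Finset.mem_univ i)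

/-- sum of absolute values of entries -/
noncomputable def sig (M : Matrix ι κ ℝ) : ℝ := ∑ i, ∑ j, |M i j|

lemma sig_nonneg (M : Matrix ι κ ℝ) : 0 ≤ sig M :=
  Finset.sum_nonneg fun i _ => Finset.sum_nonneg fun j _ => abs_nonneg _

lemma abs_dot_mulVec_le (M : Matrix ι κ ℝ) (u : ι → ℝ) (v : κ → ℝ) :
    |u ⬝ᵥ M *ᵥ v| ≤ sig M * (u ⬝ᵥ u + v ⬝ᵥ v) := by
  have h1 : u ⬝ᵥ M *ᵥ v = ∑ i, ∑ j, u i * (M i j * v j) := by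
    simp [dotProduct, mulVec, Finset.mul_sum]
  rw [h1]
  calc |∑ i, ∑ j, u i * (M i j * v j)| ≤ ∑ i, ∑ j, |u i * (M i j * v j)| := by
        refine (Finset.abs_sum_le_sum_abs _ _).trans (Finset.sum_le_sum fun i _ => ?_)
        exact Finset.abs_sum_le_sum_abs _ _
    _ ≤ ∑ i, ∑ j, |M i j| * (u ⬝ᵥ u + v ⬝ᵥ v) := by
        refine Finset.sum_le_sum fun i _ => Finset.sum_le_sum fun j _ => ?_
        have h2 : |u i * (M i j * v j)| = |M i j| * (|u i| * |v j|) := by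
          rw [abs_mul, abs_mul]; ring
        rw [h2]
        refine mul_le_mul_of_nonneg_left ?_ (abs_nonneg _)
        nlinarith [sq_le_dot u i, sq_le_dot v j, sq_nonneg (|u i| - |v j|),
          sq_abs (u i), sq_abs (v j)]
    _ = sig M * (u ⬝ᵥ u + v ⬝ᵥ v) := by
        rw [sig, Finset.sum_mul]
        exact Finset.sum_congr rfl fun i _ => (Finset.sum_mul _ _ _).symm

lemma abs_dot_mulVec_le2 (M : Matrix ι κ ℝ) (u : ι → ℝ) (v : κ → ℝ) {e : ℝ} (he : 0 < e) :
    |u ⬝ᵥ M *ᵥ v| ≤ sig M * (e * (u ⬝ᵥ u) + e⁻¹ * (v ⬝ᵥ v)) := by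
  have hs : 0 < Real.sqrt e := Real.sqrt_pos.mpr he
  have h := abs_dot_mulVec_le M (Real.sqrt e • u) ((Real.sqrt e)⁻¹ • v)
  have h1 : (Real.sqrt e • u) ⬝ᵥ M *ᵥ ((Real.sqrt e)⁻¹ • v) = u ⬝ᵥ M *ᵥ v := by
    rw [smul_dotProduct, mulVec_smul, dotProduct_smul, smul_eq_mul, smul_eq_mul,
      ← mul_assoc, mul_inv_cancel₀ hs.ne', one_mul]
  have h2 : (Real.sqrt e • u) ⬝ᵥ (Real.sqrt e • u) = e * (u ⬝ᵥ u) := by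
    rw [smul_dotProduct, dotProduct_smul, smul_eq_mul, smul_eq_mul, ← mul_assoc,
      Real.mul_self_sqrt he.le]
  have h3 : ((Real.sqrt e)⁻¹ • v) ⬝ᵥ ((Real.sqrt e)⁻¹ • v) = e⁻¹ * (v ⬝ᵥ v) := by
    rw [smul_dotProduct, dotProduct_smul, smul_eq_mul, smul_eq_mul, ← mul_assoc,
      ← mul_inv, Real.mul_self_sqrt he.le]
  rwa [h1, h2, h3] at h

lemma dot_mulVec_le (M : Matrix ι ι ℝ) (x : ι → ℝ) :
    x ⬝ᵥ M *ᵥ x ≤ 2 * sig M * (x ⬝ᵥ x) := by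
  have h := abs_dot_mulVec_le M x x
  have := le_abs_self (x ⬝ᵥ M *ᵥ x)
  nlinarith [sig_nonneg M, dot_self_nonneg x]

lemma mulVec_dot_self (M : Matrix ι κ ℝ) (v : κ → ℝ) :
    (M *ᵥ v) ⬝ᵥ (M *ᵥ v) = v ⬝ᵥ (Mᵀ * M) *ᵥ v := by
  have h : v ⬝ᵥ (Mᵀ * M) *ᵥ v = (M *ᵥ v) ⬝ᵥ (M *ᵥ v) := by
    rw [← mulVec_mulVec, dotProduct_mulVec v Mᵀ, vecMul_transpose]
  exact h.symm

lemma mulVec_dot_le (M : Matrix ι κ ℝ) (v : κ → ℝ) :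
    (M *ᵥ v) ⬝ᵥ (M *ᵥ v) ≤ 2 * sig (Mᵀ * M) * (v ⬝ᵥ v) := by
  rw [mulVec_dot_self]; exact dot_mulVec_le _ _

lemma dot_add_self_le (a b : ι → ℝ) :
    (a + b) ⬝ᵥ (a + b) ≤ 2 * (a ⬝ᵥ a) + 2 * (b ⬝ᵥ b) := by
  simp only [dotProduct, Pi.add_apply]
  calc ∑ i, (a i + b i) * (a i + b i) ≤ ∑ i, (2 * (a i * a i) + 2 * (b i * b i)) :=
        Finset.sum_le_sum fun i _ => by nlinarith [sq_nonneg (a i - b i)]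
    _ = 2 * ∑ i, a i * a i + 2 * ∑ i, b i * b i := by
        rw [Finset.sum_add_distrib, Finset.mul_sum, Finset.mul_sum]

/-- quantitative lower bound for a positive definite matrix -/
lemma posdef_lower [DecidableEq ι] (M : Matrix ι ι ℝ) (hM : M.PosDef) :
    ∃ a > (0 : ℝ), ∀ x : ι → ℝ, a * (x ⬝ᵥ x) ≤ x ⬝ᵥ M *ᵥ x := by
  cases isEmpty_or_nonempty ι with
  | inl h =>
      refine ⟨1, one_pos, fun x => ?_⟩
      simp [dotProduct]
  | inr h =>
      have hf : Continuous fun x : ι → ℝ => x ⬝ᵥ M *ᵥ x := by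
        simp only [dotProduct, mulVec]
        exact continuous_finset_sum _ fun i _ => (continuous_apply i).mul
          (continuous_finset_sum _ fun j _ => continuous_const.mul (continuous_apply j))
      have hcpt := isCompact_sphere (0 : ι → ℝ) 1
      have hne : (Metric.sphere (0 : ι → ℝ) 1).Nonempty := by
        refine ⟨fun _ => 1, ?_⟩
        rw [mem_sphere_zero_iff_norm, pi_norm_const]
        norm_num
      obtain ⟨x₀, hx₀s, hmin⟩ := hcpt.exists_isMinOn hne hf.continuousOn
      rw [mem_sphere_zero_iff_norm] at hx₀s
      have hx₀ : x₀ ≠ 0 := by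
        intro hz; rw [hz, norm_zero] at hx₀s; norm_num at hx₀s
      have hpos : 0 < x₀ ⬝ᵥ M *ᵥ x₀ := by
        have := hM.dotProduct_mulVec_pos hx₀; simpa using this
      have hcard : 0 < (Fintype.card ι : ℝ) := by
        exact_mod_cast Fintype.card_pos
      refine ⟨(x₀ ⬝ᵥ M *ᵥ x₀) / Fintype.card ι, div_pos hpos hcard, fun x => ?_⟩
      rcases eq_or_ne x 0 with rfl | hx
      · simp
      · have hc : 0 < ‖x‖ := norm_pos_iff.mpr hx
        set u : ι → ℝ := ‖x‖⁻¹ • x with hu_def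
        have hu : ‖u‖ = 1 := by
          rw [hu_def, norm_smul, norm_inv, norm_norm, inv_mul_cancel₀ hc.ne']
        have hfu : x₀ ⬝ᵥ M *ᵥ x₀ ≤ u ⬝ᵥ M *ᵥ u :=
          hmin (mem_sphere_zero_iff_norm.mpr hu)
        have hfu2 : u ⬝ᵥ M *ᵥ u = ‖x‖⁻¹ * (‖x‖⁻¹ * (x ⬝ᵥ M *ᵥ x)) := by
          rw [hu_def, smul_dotProduct, mulVec_smul, dotProduct_smul, smul_eq_mul, smul_eq_mul]
        have h1 : (x₀ ⬝ᵥ M *ᵥ x₀) * (‖x‖ * ‖x‖) ≤ x ⬝ᵥ M *ᵥ x := by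
          rw [hfu2] at hfu
          have := mul_le_mul_of_nonneg_left hfu (by positivity : (0:ℝ) ≤ ‖x‖ * ‖x‖)
          calc (x₀ ⬝ᵥ M *ᵥ x₀) * (‖x‖ * ‖x‖) = ‖x‖ * ‖x‖ * (x₀ ⬝ᵥ M *ᵥ x₀) := by ring
            _ ≤ ‖x‖ * ‖x‖ * (‖x‖⁻¹ * (‖x‖⁻¹ * (x ⬝ᵥ M *ᵥ x))) := this
            _ = x ⬝ᵥ M *ᵥ x := by field_simp
        have h2 : x ⬝ᵥ x ≤ (Fintype.card ι : ℝ) * (‖x‖ * ‖x‖) := by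
          have : ∀ i ∈ Finset.univ, x i * x i ≤ ‖x‖ * ‖x‖ := by
            intro i _
            have hi : |x i| ≤ ‖x‖ := by
              simpa [Real.norm_eq_abs] using norm_le_pi_norm x i
            nlinarith [abs_nonneg (x i), sq_abs (x i)]
          calc x ⬝ᵥ x = ∑ i, x i * x i := rfl
            _ ≤ ∑ _i : ι, ‖x‖ * ‖x‖ := Finset.sum_le_sum this
            _ = (Fintype.card ι : ℝ) * (‖x‖ * ‖x‖) := by
                rw [Finset.sum_const, nsmul_eq_mul]; simp
        have ha : (0:ℝ) ≤ (x₀ ⬝ᵥ M *ᵥ x₀) / Fintype.card ι := (div_pos hpos hcard).le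
        calc (x₀ ⬝ᵥ M *ᵥ x₀) / Fintype.card ι * (x ⬝ᵥ x)
            ≤ (x₀ ⬝ᵥ M *ᵥ x₀) / Fintype.card ι * ((Fintype.card ι : ℝ) * (‖x‖ * ‖x‖)) :=
              mul_le_mul_of_nonneg_left h2 ha
          _ = (x₀ ⬝ᵥ M *ᵥ x₀) * (‖x‖ * ‖x‖) := by field_simp
          _ ≤ x ⬝ᵥ M *ᵥ x := h1

lemma quad_conj {a b : Type*} [Fintype a] [Fintype b]
    (G : Matrix a b ℝ) (N : Matrix a a ℝ) (v : b → ℝ) :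
    v ⬝ᵥ (Gᵀ * N * G) *ᵥ v = (G *ᵥ v) ⬝ᵥ N *ᵥ (G *ᵥ v) := by
  rw [← mulVec_mulVec, ← mulVec_mulVec, dotProduct_mulVec, vecMul_transpose]

end QPaux

/-- Trajectories of the discrete-time LTI system
`ξ(t+1) = A ξ(t) + B w(t)`, `z(t) = C ξ(t) + D w(t)`. -/
def IsTraj {n m q : ℕ} (A : Matrix (Fin n) (Fin n) ℝ) (B : Matrix (Fin n) (Fin m) ℝ)
    (C : Matrix (Fin q) (Fin n) ℝ) (D : Matrix (Fin q) (Fin m) ℝ)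
    (ξ : ℕ → Fin n → ℝ) (w : ℕ → Fin m → ℝ) (z : ℕ → Fin q → ℝ) : Prop :=
  ∀ t : ℕ, ξ (t + 1) = A.mulVec (ξ t) + B.mulVec (w t) ∧
    z t = C.mulVec (ξ t) + D.mulVec (w t)

/-- The system satisfies quadratic performance specified by `P`:
(i) asymptotic stability for zero performance input, and
(ii) for some `ε > 0`, for every trajectory with `ξ(0) = 0` and square-summable input `w`,
the performance series converges and its value is at most `-ε ∑ wᵀw`. -/
def QuadPerf {n m q : ℕ} (A : Matrix (Fin n) (Fin n) ℝ) (B : Matrix (Fin n) (Fin m) ℝ)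
    (C : Matrix (Fin q) (Fin n) ℝ) (D : Matrix (Fin q) (Fin m) ℝ)
    (P : Matrix (Fin m ⊕ Fin q) (Fin m ⊕ Fin q) ℝ) : Prop :=
  (∀ ξ : ℕ → Fin n → ℝ, (∀ t : ℕ, ξ (t + 1) = A.mulVec (ξ t)) →
      Tendsto ξ atTop (𝓝 0)) ∧
  ∃ ε > (0 : ℝ), ∀ ξ w z, IsTraj A B C D ξ w z → ξ 0 = 0 →
    Summable (fun t => w t ⬝ᵥ w t) →
    ∃ l : ℝ,
      Tendsto (fun N => ∑ t ∈ Finset.range N,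
        Sum.elim (w t) (z t) ⬝ᵥ P.mulVec (Sum.elim (w t) (z t))) atTop (𝓝 l) ∧
      l ≤ -ε * ∑' t, w t ⬝ᵥ w t

/-- The LMI matrix
`L(X) = [[I,0],[A,B]]ᵀ diag(-X, X) [[I,0],[A,B]] + [[0,I],[C,D]]ᵀ P [[0,I],[C,D]]`. -/
noncomputable def Lmat {n m q : ℕ} (A : Matrix (Fin n) (Fin n) ℝ) (B : Matrix (Fin n) (Fin m) ℝ)
    (C : Matrix (Fin q) (Fin n) ℝ) (D : Matrix (Fin q) (Fin m) ℝ)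
    (P : Matrix (Fin m ⊕ Fin q) (Fin m ⊕ Fin q) ℝ) (X : Matrix (Fin n) (Fin n) ℝ) :
    Matrix (Fin n ⊕ Fin m) (Fin n ⊕ Fin m) ℝ :=
  (Matrix.fromBlocks (1 : Matrix (Fin n) (Fin n) ℝ) 0 A B)ᵀ * Matrix.fromBlocks (-X) 0 0 X * Matrix.fromBlocks 1 0 A B
    + (Matrix.fromBlocks 0 (1 : Matrix (Fin m) (Fin m) ℝ) C D)ᵀ * P * Matrix.fromBlocks 0 1 C D

/-- Key quadratic-form identity for `Lmat`. -/
lemma lmat_quad {n m q : ℕ} (A : Matrix (Fin n) (Fin n) ℝ) (B : Matrix (Fin n) (Fin m) ℝ)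
    (C : Matrix (Fin q) (Fin n) ℝ) (D : Matrix (Fin q) (Fin m) ℝ)
    (P : Matrix (Fin m ⊕ Fin q) (Fin m ⊕ Fin q) ℝ) (X : Matrix (Fin n) (Fin n) ℝ)
    (x : Fin n → ℝ) (w : Fin m → ℝ) :
    Sum.elim x w ⬝ᵥ (Lmat A B C D P X) *ᵥ Sum.elim x w
      = ((A *ᵥ x + B *ᵥ w) ⬝ᵥ X *ᵥ (A *ᵥ x + B *ᵥ w) - x ⬝ᵥ X *ᵥ x)
        + (Sum.elim w (C *ᵥ x + D *ᵥ w)) ⬝ᵥ P *ᵥ (Sum.elim w (C *ᵥ x + D *ᵥ w)) := by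
  have e1 : (fromBlocks (1 : Matrix (Fin n) (Fin n) ℝ) 0 A B) *ᵥ (Sum.elim x w)
      = Sum.elim x (A *ᵥ x + B *ᵥ w) := by
    rw [fromBlocks_mulVec]
    simp
  have e2 : (fromBlocks (0 : Matrix (Fin m) (Fin n) ℝ) 1 C D) *ᵥ (Sum.elim x w)
      = Sum.elim w (C *ᵥ x + D *ᵥ w) := by
    rw [fromBlocks_mulVec]
    simp
  have hL : Lmat A B C D P X
      = (fromBlocks (1 : Matrix (Fin n) (Fin n) ℝ) 0 A B : Matrix (Fin n ⊕ Fin n) (Fin n ⊕ Fin m) ℝ)ᵀ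
          * (fromBlocks (-X) 0 0 X : Matrix (Fin n ⊕ Fin n) (Fin n ⊕ Fin n) ℝ)
          * (fromBlocks (1 : Matrix (Fin n) (Fin n) ℝ) 0 A B : Matrix (Fin n ⊕ Fin n) (Fin n ⊕ Fin m) ℝ)
        + (fromBlocks (0 : Matrix (Fin m) (Fin n) ℝ) 1 C D : Matrix (Fin m ⊕ Fin q) (Fin n ⊕ Fin m) ℝ)ᵀ
          * P * (fromBlocks (0 : Matrix (Fin m) (Fin n) ℝ) 1 C D : Matrix (Fin m ⊕ Fin q) (Fin n ⊕ Fin m) ℝ) :=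
    rfl
  rw [hL, add_mulVec, dotProduct_add, QPaux.quad_conj, QPaux.quad_conj, e1, e2,
    fromBlocks_mulVec]
  simp [neg_mulVec, sumElim_dotProduct_sumElim]
  ring

set_option maxHeartbeats 2000000 in
/-- If `R ⪰ 0` and there exists a symmetric `X ≻ 0` with `L(X) ≺ 0`, then the system
satisfies quadratic performance specified by `P = [[Q, S], [Sᵀ, R]]`. -/
theorem quadratic_performance_of_LMI {n m q : ℕ}
    (A : Matrix (Fin n) (Fin n) ℝ) (B : Matrix (Fin n) (Fin m) ℝ)
    (C : Matrix (Fin q) (Fin n) ℝ) (D : Matrix (Fin q) (Fin m) ℝ)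
    (Q : Matrix (Fin m) (Fin m) ℝ) (S : Matrix (Fin m) (Fin q) ℝ)
    (R : Matrix (Fin q) (Fin q) ℝ) (hQ : Q.IsSymm) (hR : R.IsSymm)
    (hRpsd : R.PosSemidef)
    (hX : ∃ X : Matrix (Fin n) (Fin n) ℝ, X.IsSymm ∧ X.PosDef ∧
      (-(Lmat A B C D (Matrix.fromBlocks Q S Sᵀ R) X)).PosDef) :
    QuadPerf A B C D (Matrix.fromBlocks Q S Sᵀ R) := by
  classical
  obtain ⟨X, hXsym, hXpd, hLpd⟩ := hX
  set P : Matrix (Fin m ⊕ Fin q) (Fin m ⊕ Fin q) ℝ := fromBlocks Q S Sᵀ R with hPdef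
  obtain ⟨ε₀, hε₀, hL⟩ := QPaux.posdef_lower _ hLpd
  obtain ⟨aX, haX, hXlow⟩ := QPaux.posdef_lower X hXpd
  have hLq : ∀ (x : Fin n → ℝ) (w : Fin m → ℝ),
      Sum.elim x w ⬝ᵥ (Lmat A B C D P X) *ᵥ Sum.elim x w ≤ -ε₀ * (x ⬝ᵥ x + w ⬝ᵥ w) := by
    intro x w
    have h := hL (Sum.elim x w)
    rw [neg_mulVec, dotProduct_neg, sumElim_dotProduct_sumElim] at h
    linarith
  have hXub : ∀ v : Fin n → ℝ, v ⬝ᵥ X *ᵥ v ≤ 2 * QPaux.sig X * (v ⬝ᵥ v) :=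
    fun v => QPaux.dot_mulVec_le X v
  have hXnn : ∀ v : Fin n → ℝ, 0 ≤ v ⬝ᵥ X *ᵥ v := fun v => by
    simpa using hXpd.posSemidef.dotProduct_mulVec_nonneg v
  constructor
  · -- Part (i): stability
    intro ξ hξ
    set V : ℕ → ℝ := fun t => ξ t ⬝ᵥ X *ᵥ ξ t with hVdef
    have hVnn : ∀ t, 0 ≤ V t := fun t => hXnn (ξ t)
    have hstep : ∀ t, V (t + 1) ≤ V t - ε₀ * (ξ t ⬝ᵥ ξ t) := by
      intro t
      have hq := lmat_quad A B C D P X (ξ t) 0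
      rw [mulVec_zero, mulVec_zero, add_zero, add_zero] at hq
      have hR0 : Sum.elim (0 : Fin m → ℝ) (C *ᵥ ξ t) ⬝ᵥ P *ᵥ Sum.elim 0 (C *ᵥ ξ t)
          = (C *ᵥ ξ t) ⬝ᵥ R *ᵥ (C *ᵥ ξ t) := by
        rw [hPdef, fromBlocks_mulVec]
        simp [sumElim_dotProduct_sumElim]
      rw [hR0] at hq
      have hRnn : 0 ≤ (C *ᵥ ξ t) ⬝ᵥ R *ᵥ (C *ᵥ ξ t) := by simpa using hRpsd.dotProduct_mulVec_nonneg (C *ᵥ ξ t)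
      have hlq := hLq (ξ t) 0
      have h00 : (0 : Fin m → ℝ) ⬝ᵥ (0 : Fin m → ℝ) = 0 := by simp
      rw [h00, add_zero] at hlq
      have hA : ξ (t + 1) = A *ᵥ ξ t := hξ t
      have hVt1 : V (t + 1) = (A *ᵥ ξ t) ⬝ᵥ X *ᵥ (A *ᵥ ξ t) := by
        simp only [hVdef]; rw [hA]
      have hVt : V t = ξ t ⬝ᵥ X *ᵥ ξ t := rfl
      linarith [hq, hRnn, hlq]
    set b : ℝ := 2 * QPaux.sig X + 1 with hbdef
    have hb : 0 < b := by have := QPaux.sig_nonneg X; simp only [hbdef]; linarith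
    have hVub : ∀ t, V t ≤ b * (ξ t ⬝ᵥ ξ t) := by
      intro t
      have h1 := hXub (ξ t)
      have h2 := QPaux.dot_self_nonneg (ξ t)
      simp only [hbdef]
      nlinarith
    set ρ : ℝ := max (1 - ε₀ / b) 0 with hρdef
    have hρ0 : 0 ≤ ρ := le_max_right _ _
    have hρ1 : ρ < 1 := by
      apply max_lt _ one_pos
      have : 0 < ε₀ / b := div_pos hε₀ hb
      linarith
    have hcontr : ∀ t, V (t + 1) ≤ ρ * V t := by
      intro t
      have h1 : ε₀ / b * V t ≤ ε₀ * (ξ t ⬝ᵥ ξ t) := by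
        have h2 := hVub t
        rw [div_mul_eq_mul_div, div_le_iff₀ hb]
        nlinarith
      have h3 : V (t + 1) ≤ (1 - ε₀ / b) * V t := by
        have := hstep t
        nlinarith
      have h4 : (1 - ε₀ / b) * V t ≤ ρ * V t :=
        mul_le_mul_of_nonneg_right (le_max_left _ _) (hVnn t)
      linarith
    have hgeom : ∀ t, V t ≤ ρ ^ t * V 0 := by
      intro t
      induction t with
      | zero => simp
      | succ t ih =>
          calc V (t + 1) ≤ ρ * V t := hcontr t
            _ ≤ ρ * (ρ ^ t * V 0) := mul_le_mul_of_nonneg_left ih hρ0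
            _ = ρ ^ (t + 1) * V 0 := by ring
    have hVlim : Tendsto V atTop (𝓝 0) := by
      have h1 := (tendsto_pow_atTop_nhds_zero_of_lt_one hρ0 hρ1).mul_const (V 0)
      rw [zero_mul] at h1
      exact tendsto_of_tendsto_of_tendsto_of_le_of_le tendsto_const_nhds h1 hVnn hgeom
    have hdotlim : Tendsto (fun t => ξ t ⬝ᵥ ξ t) atTop (𝓝 0) := by
      have h1 : Tendsto (fun t => aX⁻¹ * V t) atTop (𝓝 0) := by
        have := hVlim.const_mul aX⁻¹
        rwa [mul_zero] at this
      refine tendsto_of_tendsto_of_tendsto_of_le_of_le tendsto_const_nhds h1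
        (fun t => QPaux.dot_self_nonneg (ξ t)) (fun t => ?_)
      have h2 := hXlow (ξ t)
      rw [inv_mul_eq_div, le_div_iff₀ haX]
      nlinarith
    rw [tendsto_pi_nhds]
    intro i
    have hsq : Tendsto (fun t => Real.sqrt (ξ t ⬝ᵥ ξ t)) atTop (𝓝 0) := by
      have := hdotlim.sqrt
      rwa [Real.sqrt_zero] at this
    have habs : ∀ t, |ξ t i| ≤ Real.sqrt (ξ t ⬝ᵥ ξ t) := by
      intro t
      apply Real.abs_le_sqrt
      have := QPaux.sq_le_dot (ξ t) i
      nlinarith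
    have hub : ∀ t, ξ t i ≤ Real.sqrt (ξ t ⬝ᵥ ξ t) :=
      fun t => (le_abs_self _).trans (habs t)
    have hlb : ∀ t, -Real.sqrt (ξ t ⬝ᵥ ξ t) ≤ ξ t i :=
      fun t => neg_le_of_neg_le ((neg_le_abs _).trans (habs t) |> fun h => by
        have := habs t; linarith [neg_abs_le (ξ t i)])
    have hneg : Tendsto (fun t => -Real.sqrt (ξ t ⬝ᵥ ξ t)) atTop (𝓝 0) := by
      have := hsq.neg; rwa [neg_zero] at this
    have := tendsto_of_tendsto_of_tendsto_of_le_of_le hneg hsq hlb hub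
    simpa using this
  · -- Part (ii): performance
    refine ⟨ε₀, hε₀, fun ξ w z htraj h0 hw => ?_⟩
    set dx : ℕ → ℝ := fun t => ξ t ⬝ᵥ ξ t with hdxdef
    set dw : ℕ → ℝ := fun t => w t ⬝ᵥ w t with hdwdef
    set V : ℕ → ℝ := fun t => ξ t ⬝ᵥ X *ᵥ ξ t with hVdef
    set pt : ℕ → ℝ := fun t => Sum.elim (w t) (z t) ⬝ᵥ P.mulVec (Sum.elim (w t) (z t))
      with hptdef
    have hdxnn : ∀ t, 0 ≤ dx t := fun t => QPaux.dot_self_nonneg (ξ t)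
    have hdwnn : ∀ t, 0 ≤ dw t := fun t => QPaux.dot_self_nonneg (w t)
    have hVnn : ∀ t, 0 ≤ V t := fun t => hXnn (ξ t)
    have hV0 : V 0 = 0 := by simp [hVdef, h0]
    have ident : ∀ t, V (t + 1) - V t + pt t
        = Sum.elim (ξ t) (w t) ⬝ᵥ (Lmat A B C D P X) *ᵥ Sum.elim (ξ t) (w t) := by
      intro t
      have hq := lmat_quad A B C D P X (ξ t) (w t)
      rw [← (htraj t).1, ← (htraj t).2] at hq
      rw [hq]
    -- abbreviations for constants
    set sQ : ℝ := QPaux.sig Q with hsQdef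
    set sS : ℝ := QPaux.sig S with hsSdef
    set sP : ℝ := QPaux.sig P with hsPdef
    have hsQ : 0 ≤ sQ := QPaux.sig_nonneg Q
    have hsS : 0 ≤ sS := QPaux.sig_nonneg S
    have hsP : 0 ≤ sP := QPaux.sig_nonneg P
    set czz : ℝ := 2 * (2 * QPaux.sig (Cᵀ * C)) + 2 * (2 * QPaux.sig (Dᵀ * D)) with hczzdef
    have hczz : 0 ≤ czz := by
      have := QPaux.sig_nonneg (Cᵀ * C); have := QPaux.sig_nonneg (Dᵀ * D)
      simp only [hczzdef]; linarith
    have hz2 : ∀ t, z t ⬝ᵥ z t ≤ czz * (dx t + dw t) := by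
      intro t
      rw [(htraj t).2]
      have h1 := QPaux.dot_add_self_le (C *ᵥ ξ t) (D *ᵥ w t)
      have h2 := QPaux.mulVec_dot_le C (ξ t)
      have h3 := QPaux.mulVec_dot_le D (w t)
      have h4 := QPaux.sig_nonneg (Cᵀ * C)
      have h5 := QPaux.sig_nonneg (Dᵀ * D)
      simp only [hczzdef]
      nlinarith [hdxnn t, hdwnn t]
    set e : ℝ := (4 * sS * czz + 1) / ε₀ with hedef
    have hden : (0:ℝ) < 4 * sS * czz + 1 := by nlinarith [mul_nonneg hsS hczz]
    have he : 0 < e := div_pos hden hε₀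
    have hekey : 2 * sS * e⁻¹ * czz ≤ ε₀ / 2 := by
      rw [hedef, inv_div]
      rw [show 2 * sS * (ε₀ / (4 * sS * czz + 1)) * czz
          = (2 * sS * czz * ε₀) / (4 * sS * czz + 1) from by ring,
        div_le_div_iff₀ hden (by norm_num : (0:ℝ) < 2)]
      nlinarith [mul_nonneg (mul_nonneg hsS hczz) hε₀.le]
    have hexp : ∀ t, pt t = w t ⬝ᵥ Q *ᵥ w t + 2 * (w t ⬝ᵥ S *ᵥ z t) + z t ⬝ᵥ R *ᵥ z t := by
      intro t
      show Sum.elim (w t) (z t) ⬝ᵥ P.mulVec (Sum.elim (w t) (z t)) = _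
      rw [hPdef, show P.mulVec (Sum.elim (w t) (z t)) = P *ᵥ Sum.elim (w t) (z t) from rfl,
        hPdef, fromBlocks_mulVec]
      simp only [Sum.elim_comp_inl, Sum.elim_comp_inr, sumElim_dotProduct_sumElim,
        dotProduct_add]
      have h1 : z t ⬝ᵥ Sᵀ *ᵥ w t = w t ⬝ᵥ S *ᵥ z t := by
        rw [dotProduct_mulVec (z t) Sᵀ, vecMul_transpose, dotProduct_comm]
      rw [h1]
      ring
    have hpt_low : ∀ t, -pt t ≤ (2 * sQ + 2 * sS * e) * dw t
        + 2 * sS * e⁻¹ * (z t ⬝ᵥ z t) := by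
      intro t
      have h1 := QPaux.abs_dot_mulVec_le Q (w t) (w t)
      have h2 := QPaux.abs_dot_mulVec_le2 S (w t) (z t) he
      have h3 : 0 ≤ z t ⬝ᵥ R *ᵥ z t := by simpa using hRpsd.dotProduct_mulVec_nonneg (z t)
      have h4 := neg_abs_le (w t ⬝ᵥ Q *ᵥ w t)
      have h5 := neg_abs_le (w t ⬝ᵥ S *ᵥ z t)
      rw [hexp t]
      nlinarith
    have step2 : ∀ t, V (t + 1) - V t ≤ -(ε₀ / 2) * dx t
        + (2 * sQ + 2 * sS * e + ε₀) * dw t := by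
      intro t
      have h3 : 2 * sS * e⁻¹ * (z t ⬝ᵥ z t) ≤ ε₀ / 2 * (dx t + dw t) := by
        have h4 : 0 ≤ 2 * sS * e⁻¹ := by positivity
        calc 2 * sS * e⁻¹ * (z t ⬝ᵥ z t) ≤ 2 * sS * e⁻¹ * (czz * (dx t + dw t)) :=
              mul_le_mul_of_nonneg_left (hz2 t) h4
          _ = 2 * sS * e⁻¹ * czz * (dx t + dw t) := by ring
          _ ≤ ε₀ / 2 * (dx t + dw t) :=
              mul_le_mul_of_nonneg_right hekey (by linarith [hdxnn t, hdwnn t])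
      have h5 := hLq (ξ t) (w t)
      have h6 := ident t
      have h7 := hpt_low t
      nlinarith [mul_nonneg hε₀.le (hdwnn t)]
    set K : ℝ := 2 * sQ + 2 * sS * e + ε₀ with hKdef
    have hK : 0 ≤ K := by
      have : 0 ≤ 2 * sS * e := by positivity
      simp only [hKdef]; linarith
    set T : ℝ := ∑' t, dw t with hTdef
    have hpart : ∀ N, ∑ t ∈ Finset.range N, dw t ≤ T :=
      fun N => Summable.sum_le_tsum _ (fun i _ => hdwnn i) hw
    have hptabs : ∀ t, |pt t| ≤ 2 * sP * (1 + czz) * (dx t + dw t) := by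
      intro t
      have h1 := QPaux.abs_dot_mulVec_le P (Sum.elim (w t) (z t)) (Sum.elim (w t) (z t))
      rw [sumElim_dotProduct_sumElim] at h1
      have h2 := hz2 t
      have h1' : |pt t| ≤ sP * (dw t + z t ⬝ᵥ z t + (dw t + z t ⬝ᵥ z t)) := h1
      nlinarith [hdxnn t, hdwnn t, hsP, hczz, QPaux.dot_self_nonneg (z t),
        mul_nonneg hsP (hdxnn t)]
    have hper : ∀ t, pt t ≤ (V t - V (t + 1)) + (-ε₀) * dw t := by
      intro t
      have h5 := hLq (ξ t) (w t)
      have h6 := ident t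
      have h5' : Sum.elim (ξ t) (w t) ⬝ᵥ (Lmat A B C D P X) *ᵥ Sum.elim (ξ t) (w t)
          ≤ -ε₀ * (dx t + dw t) := h5
      nlinarith [mul_nonneg hε₀.le (hdxnn t)]
    clear_value dx dw V pt sQ sS sP czz e K T
    have hsumdx : ∀ N, ∑ t ∈ Finset.range N, dx t ≤ 2 * (K * T) / ε₀ := by
      intro N
      have htel : ∑ t ∈ Finset.range N, (V (t + 1) - V t) = V N - V 0 :=
        Finset.sum_range_sub V N
      have hss := Finset.sum_le_sum (fun t (_ : t ∈ Finset.range N) => step2 t)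
      rw [htel] at hss
      have h6 : ∑ t ∈ Finset.range N, (-(ε₀ / 2) * dx t + K * dw t)
          = -(ε₀ / 2) * ∑ t ∈ Finset.range N, dx t + K * ∑ t ∈ Finset.range N, dw t := by
        rw [Finset.sum_add_distrib, ← Finset.mul_sum, ← Finset.mul_sum]
      rw [h6] at hss
      have h7 : K * ∑ t ∈ Finset.range N, dw t ≤ K * T :=
        mul_le_mul_of_nonneg_left (hpart N) hK
      rw [le_div_iff₀ hε₀]
      nlinarith [hVnn N, hV0]
    have hdx : Summable dx := summable_of_sum_range_le hdxnn hsumdx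
    have hpt_sum : Summable pt :=
      Summable.of_abs (Summable.of_nonneg_of_le (fun t => abs_nonneg _) hptabs
        ((hdx.add hw).mul_left _))
    refine ⟨∑' t, pt t, hpt_sum.hasSum.tendsto_sum_nat, ?_⟩
    have hSle : ∀ N, ∑ t ∈ Finset.range N, pt t ≤ -ε₀ * ∑ t ∈ Finset.range N, dw t := by
      intro N
      have h8 := Finset.sum_le_sum (fun t (_ : t ∈ Finset.range N) => hper t)
      have h9 : ∑ t ∈ Finset.range N, ((V t - V (t + 1)) + (-ε₀) * dw t)
          = (V 0 - V N) + (-ε₀) * ∑ t ∈ Finset.range N, dw t := by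
        rw [Finset.sum_add_distrib, ← Finset.mul_sum, Finset.sum_range_sub']
      rw [h9] at h8
      linarith [hVnn N]
    have hT : Tendsto (fun N => -ε₀ * ∑ t ∈ Finset.range N, dw t) atTop (𝓝 (-ε₀ * T)) := by
      rw [hTdef]
      exact (hw.hasSum.tendsto_sum_nat).const_mul (-ε₀)
    exact le_of_tendsto_of_tendsto' hpt_sum.hasSum.tendsto_sum_nat hT hSle
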